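/- Let f₀: S² → ℂP^m be a holomorphic curve with Frenet frame f₀, f₁, f₂, ... satisfying ⟨f₀, conj(f₀)⟩ = 0 and ⟨f₂, conj(f₀)⟩ = 0 (bilinear pairing). Then ⟨f₃, conj(f₀)⟩ = 0 as well. -/

import Mathlib

open scoped ContDiff

/-- Wirtinger derivative `∂/∂z`. -/
noncomputable def wirt (f : ℂ → ℂ) (z : ℂ) : ℂ :=
  (1 / 2) * (fderiv ℝ f z 1 - Complex.I * fderiv ℝ f z Complex.I)

lemma wirt_of_zero {g : ℂ → ℂ} (h : ∀ w, g w = 0) (z : ℂ) : wirt g z = 0 := by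
  have hg : g = fun _ => (0:ℂ) := funext h
  subst hg
  simp [wirt]

lemma wirt_mul {f g : ℂ → ℂ} {z : ℂ} (hf : DifferentiableAt ℝ f z)
    (hg : DifferentiableAt ℝ g z) :
    wirt (fun w => f w * g w) z = wirt f z * g z + f z * wirt g z := by
  have h := fderiv_fun_mul hf hg
  simp only [wirt, h, ContinuousLinearMap.add_apply, ContinuousLinearMap.smul_apply,
    smul_eq_mul]
  ring

lemma wirt_sum {ι : Type*} (s : Finset ι) {f : ι → ℂ → ℂ} {z : ℂ}
    (h : ∀ i ∈ s, DifferentiableAt ℝ (f i) z) :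
    wirt (fun w => ∑ i ∈ s, f i w) z = ∑ i ∈ s, wirt (f i) z := by
  simp only [wirt]
  rw [fderiv_fun_sum h]
  simp only [ContinuousLinearMap.sum_apply, Finset.mul_sum, ← Finset.sum_sub_distrib]

lemma wirt_eq_deriv {f : ℂ → ℂ} {z : ℂ} (hf : DifferentiableAt ℂ f z) :
    wirt f z = deriv f z := by
  have h1 : fderiv ℝ f z = (fderiv ℂ f z).restrictScalars ℝ :=
    hf.fderiv_restrictScalars ℝ
  have hI : fderiv ℂ f z Complex.I = Complex.I * fderiv ℂ f z 1 := by
    have := (fderiv ℂ f z).map_smul Complex.I (1 : ℂ)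
    simpa [smul_eq_mul] using this
  rw [wirt, h1]
  simp only [ContinuousLinearMap.coe_restrictScalars', hI, fderiv_apply_one_eq_deriv]
  linear_combination (-(1:ℂ)/2) * deriv f z * Complex.I_mul_I

lemma contDiff_wirt {g : ℂ → ℂ} (hg : ContDiff ℝ ∞ g) : ContDiff ℝ ∞ (wirt g) := by
  have hd : ContDiff ℝ ∞ (fderiv ℝ g) := (contDiff_infty_iff_fderiv.mp hg).2
  have h1 : ContDiff ℝ ∞ (fun z => fderiv ℝ g z 1) :=
    (ContinuousLinearMap.apply ℝ ℂ (1:ℂ)).contDiff.comp hd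
  have hI : ContDiff ℝ ∞ (fun z => fderiv ℝ g z Complex.I) :=
    (ContinuousLinearMap.apply ℝ ℂ Complex.I).contDiff.comp hd
  exact contDiff_const.mul (h1.sub (contDiff_const.mul hI))

lemma sum_sub_mul {n : ℕ} (x y t : Fin n → ℂ) (c : ℂ) :
    ∑ i, (x i - c * y i) * t i = (∑ i, x i * t i) - c * ∑ i, y i * t i := by
  rw [Finset.mul_sum, ← Finset.sum_sub_distrib]
  exact Finset.sum_congr rfl fun i _ => by ring

lemma wirt_bilin {n : ℕ} {g h : ℂ → Fin n → ℂ} {z : ℂ}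
    (hg : ∀ i, DifferentiableAt ℝ (fun w => g w i) z)
    (hh : ∀ i, DifferentiableAt ℝ (fun w => h w i) z)
    (hzero : ∀ w, ∑ i, g w i * h w i = 0) :
    ∑ i, (wirt (fun w => g w i) z * h z i + g z i * wirt (fun w => h w i) z) = 0 := by
  have h0 := wirt_of_zero hzero z
  rw [wirt_sum Finset.univ (fun i _ => (show DifferentiableAt ℝ (fun w => g w i * h w i) z from (hg i).mul (hh i)))] at h0
  rw [← h0]
  exact Finset.sum_congr rfl fun i _ => (wirt_mul (hg i) (hh i)).symm

lemma cast_normSq_sum {n : ℕ} (v : Fin n → ℂ) :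
    ((∑ j, Complex.normSq (v j) : ℝ) : ℂ) = ∑ j, v j * starRingEnd ℂ (v j) := by
  push_cast
  simp [Complex.mul_conj]

lemma cast_normSq_sum_ne {n : ℕ} (v : Fin n → ℂ) (hv : v ≠ 0) :
    ((∑ j, Complex.normSq (v j) : ℝ) : ℂ) ≠ 0 := by
  rw [Ne, Complex.ofReal_eq_zero]
  intro h
  apply hv
  funext j
  have := (Finset.sum_eq_zero_iff_of_nonneg
    (fun j _ => Complex.normSq_nonneg (v j))).mp h j (Finset.mem_univ j)
  simpa using Complex.normSq_eq_zero.mp this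
/-- Let `f₀ : S² → ℂPᵐ` be a holomorphic curve (nowhere-zero holomorphic
lift `F`) with Frenet frame `f₀, f₁, f₂, f₃` (each `f_{i+1} = ∂f_i - (⟨∂f_i,f_i⟩_H/|f_i|²) f_i`).
If the bilinear pairings `⟨f₀, conj f₀⟩` and `⟨f₂, conj f₀⟩` vanish identically, then so does
`⟨f₃, conj f₀⟩`. -/
theorem isotropy_order_two_implies_three (m : ℕ) (hm : 1 ≤ m)
    (F f1 f2 f3 : ℂ → Fin (m + 1) → ℂ)
    (hhol : ∀ i, Differentiable ℂ fun z => F z i)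
    (hnz : ∀ z, F z ≠ 0) (hnz1 : ∀ z, f1 z ≠ 0) (hnz2 : ∀ z, f2 z ≠ 0)
    (hfull : ∀ v : Fin (m + 1) → ℂ,
      (∀ z, ∑ i, F z i * starRingEnd ℂ (v i) = 0) → v = 0)
    (hf1 : ∀ z i, f1 z i = wirt (fun w => F w i) z -
      ((∑ j, wirt (fun w => F w j) z * starRingEnd ℂ (F z j)) /
        ((∑ j, Complex.normSq (F z j) : ℝ) : ℂ)) * F z i)
    (hf2 : ∀ z i, f2 z i = wirt (fun w => f1 w i) z -
      ((∑ j, wirt (fun w => f1 w j) z * starRingEnd ℂ (f1 z j)) /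
        ((∑ j, Complex.normSq (f1 z j) : ℝ) : ℂ)) * f1 z i)
    (hf3 : ∀ z i, f3 z i = wirt (fun w => f2 w i) z -
      ((∑ j, wirt (fun w => f2 w j) z * starRingEnd ℂ (f2 z j)) /
        ((∑ j, Complex.normSq (f2 z j) : ℝ) : ℂ)) * f2 z i)
    (h0 : ∀ z, ∑ i, F z i * F z i = 0)
    (h2 : ∀ z, ∑ i, f2 z i * F z i = 0) :
    ∀ z, ∑ i, f3 z i * F z i = 0 := by
  classical
  have hle : (1 : WithTop ℕ∞) ≤ ∞ := by exact_mod_cast le_top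
  have sconj : ContDiff ℝ ∞ (fun z : ℂ => starRingEnd ℂ z) := by
    have := Complex.conjCLE.contDiff (n := (∞ : WithTop ℕ∞))
    exact this
  have sF : ∀ i, ContDiff ℝ ∞ (fun z => F z i) := fun i =>
    ((hhol i).contDiff).restrict_scalars ℝ
  have swF : ∀ i, ContDiff ℝ ∞ (fun z => wirt (fun w => F w i) z) := fun i =>
    contDiff_wirt (sF i)
  have sD0 : ContDiff ℝ ∞ (fun z => ((∑ j, Complex.normSq (F z j) : ℝ) : ℂ)) := by
    have he : (fun z => ((∑ j, Complex.normSq (F z j) : ℝ) : ℂ))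
        = fun z => ∑ j, F z j * starRingEnd ℂ (F z j) :=
      funext fun z => cast_normSq_sum _
    rw [he]
    exact ContDiff.sum fun j _ => (sF j).mul (sconj.comp (sF j))
  have sA0 : ContDiff ℝ ∞
      (fun z => ∑ j, wirt (fun w => F w j) z * starRingEnd ℂ (F z j)) :=
    ContDiff.sum fun j _ => (swF j).mul (sconj.comp (sF j))
  have sf1 : ∀ i, ContDiff ℝ ∞ (fun z => f1 z i) := by
    intro i
    have he : (fun z => f1 z i) = fun z => wirt (fun w => F w i) z -
        ((∑ j, wirt (fun w => F w j) z * starRingEnd ℂ (F z j)) /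
          ((∑ j, Complex.normSq (F z j) : ℝ) : ℂ)) * F z i :=
      funext fun z => hf1 z i
    rw [he]
    exact (swF i).sub ((sA0.mul (sD0.inv fun z => cast_normSq_sum_ne _ (hnz z))).mul (sF i))
  have swf1 : ∀ i, ContDiff ℝ ∞ (fun z => wirt (fun w => f1 w i) z) := fun i =>
    contDiff_wirt (sf1 i)
  have sD1 : ContDiff ℝ ∞ (fun z => ((∑ j, Complex.normSq (f1 z j) : ℝ) : ℂ)) := by
    have he : (fun z => ((∑ j, Complex.normSq (f1 z j) : ℝ) : ℂ))
        = fun z => ∑ j, f1 z j * starRingEnd ℂ (f1 z j) :=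
      funext fun z => cast_normSq_sum _
    rw [he]
    exact ContDiff.sum fun j _ => (sf1 j).mul (sconj.comp (sf1 j))
  have sA1 : ContDiff ℝ ∞
      (fun z => ∑ j, wirt (fun w => f1 w j) z * starRingEnd ℂ (f1 z j)) :=
    ContDiff.sum fun j _ => (swf1 j).mul (sconj.comp (sf1 j))
  have sf2 : ∀ i, ContDiff ℝ ∞ (fun z => f2 z i) := by
    intro i
    have he : (fun z => f2 z i) = fun z => wirt (fun w => f1 w i) z -
        ((∑ j, wirt (fun w => f1 w j) z * starRingEnd ℂ (f1 z j)) /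
          ((∑ j, Complex.normSq (f1 z j) : ℝ) : ℂ)) * f1 z i :=
      funext fun z => hf2 z i
    rw [he]
    exact (swf1 i).sub ((sA1.mul (sD1.inv fun z => cast_normSq_sum_ne _ (hnz1 z))).mul (sf1 i))
  have dFat : ∀ (i) (z : ℂ), DifferentiableAt ℝ (fun w => F w i) z := fun i z =>
    ((sF i).differentiable (by simp)).differentiableAt
  have f1at : ∀ (i) (z : ℂ), DifferentiableAt ℝ (fun w => f1 w i) z := fun i z =>
    ((sf1 i).differentiable (by simp)).differentiableAt
  have f2at : ∀ (i) (z : ℂ), DifferentiableAt ℝ (fun w => f2 w i) z := fun i z =>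
    ((sf2 i).differentiable (by simp)).differentiableAt
  -- abstract the Frenet coefficients
  obtain ⟨c0, hc0⟩ : ∃ c : ℂ → ℂ, ∀ z i, f1 z i = wirt (fun w => F w i) z - c z * F z i :=
    ⟨fun z => (∑ j, wirt (fun w => F w j) z * starRingEnd ℂ (F z j)) /
      ((∑ j, Complex.normSq (F z j) : ℝ) : ℂ), hf1⟩
  obtain ⟨c1, hc1⟩ : ∃ c : ℂ → ℂ, ∀ z i, f2 z i = wirt (fun w => f1 w i) z - c z * f1 z i :=
    ⟨fun z => (∑ j, wirt (fun w => f1 w j) z * starRingEnd ℂ (f1 z j)) /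
      ((∑ j, Complex.normSq (f1 z j) : ℝ) : ℂ), hf2⟩
  obtain ⟨c2, hc2⟩ : ∃ c : ℂ → ℂ, ∀ z i, f3 z i = wirt (fun w => f2 w i) z - c z * f2 z i :=
    ⟨fun z => (∑ j, wirt (fun w => f2 w j) z * starRingEnd ℂ (f2 z j)) /
      ((∑ j, Complex.normSq (f2 z j) : ℝ) : ℂ), hf3⟩
  have hwFeq : ∀ (z : ℂ) (i), wirt (fun w => F w i) z = f1 z i + c0 z * F z i := by
    intro z i; rw [hc0 z i]; ring
  -- Step A : ⟨∂F, F⟩ = 0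
  have stepA : ∀ z, ∑ i, wirt (fun w => F w i) z * F z i = 0 := by
    intro z
    have h := wirt_bilin (fun i => dFat i z) (fun i => dFat i z) h0
    have h' : (2 : ℂ) * ∑ i, wirt (fun w => F w i) z * F z i = 0 := by
      rw [Finset.mul_sum, ← h]
      exact Finset.sum_congr rfl fun i _ => by ring
    exact (mul_eq_zero.mp h').resolve_left two_ne_zero
  -- Step B : ⟨f1, F⟩ = 0
  have stepB : ∀ z, ∑ i, f1 z i * F z i = 0 := by
    intro z
    have he : ∑ i, f1 z i * F z i
        = (∑ i, wirt (fun w => F w i) z * F z i) - c0 z * ∑ i, F z i * F z i := by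
      rw [← sum_sub_mul]
      exact Finset.sum_congr rfl fun i _ => by rw [hc0]
    rw [he, stepA z, h0 z]; ring
  -- Step C : ⟨∂f1, F⟩ + ⟨f1, f1⟩ = 0
  have stepC : ∀ z, (∑ i, wirt (fun w => f1 w i) z * F z i)
      + (∑ i, f1 z i * f1 z i) = 0 := by
    intro z
    have h := wirt_bilin (fun i => f1at i z) (fun i => dFat i z) stepB
    have he : ∑ i, (wirt (fun w => f1 w i) z * F z i + f1 z i * wirt (fun w => F w i) z)
        = ((∑ i, wirt (fun w => f1 w i) z * F z i) + (∑ i, f1 z i * f1 z i))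
          + c0 z * ∑ i, f1 z i * F z i := by
      rw [Finset.mul_sum, ← Finset.sum_add_distrib, ← Finset.sum_add_distrib]
      exact Finset.sum_congr rfl fun i _ => by rw [hwFeq z i]; ring
    rw [he, stepB z] at h
    linear_combination h
  -- Step D : ⟨∂f1, F⟩ = 0
  have stepD : ∀ z, ∑ i, wirt (fun w => f1 w i) z * F z i = 0 := by
    intro z
    have h := h2 z
    have he : ∑ i, f2 z i * F z i
        = (∑ i, wirt (fun w => f1 w i) z * F z i) - c1 z * ∑ i, f1 z i * F z i := by
      rw [← sum_sub_mul]
      exact Finset.sum_congr rfl fun i _ => by rw [hc1]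
    rw [he, stepB z] at h
    linear_combination h
  -- Step E : ⟨f1, f1⟩ = 0
  have stepE : ∀ z, ∑ i, f1 z i * f1 z i = 0 := by
    intro z
    have h := stepC z
    rw [stepD z] at h
    linear_combination h
  -- Step F : ⟨∂f1, f1⟩ = 0
  have stepF : ∀ z, ∑ i, wirt (fun w => f1 w i) z * f1 z i = 0 := by
    intro z
    have h := wirt_bilin (fun i => f1at i z) (fun i => f1at i z) stepE
    have h' : (2 : ℂ) * ∑ i, wirt (fun w => f1 w i) z * f1 z i = 0 := by
      rw [Finset.mul_sum, ← h]
      exact Finset.sum_congr rfl fun i _ => by ring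
    exact (mul_eq_zero.mp h').resolve_left two_ne_zero
  -- Step G : ⟨f2, f1⟩ = 0
  have stepG : ∀ z, ∑ i, f2 z i * f1 z i = 0 := by
    intro z
    have he : ∑ i, f2 z i * f1 z i
        = (∑ i, wirt (fun w => f1 w i) z * f1 z i) - c1 z * ∑ i, f1 z i * f1 z i := by
      rw [← sum_sub_mul]
      exact Finset.sum_congr rfl fun i _ => by rw [hc1]
    rw [he, stepF z, stepE z]; ring
  -- Step H : ⟨∂f2, F⟩ = 0
  have stepH : ∀ z, ∑ i, wirt (fun w => f2 w i) z * F z i = 0 := by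
    intro z
    have h := wirt_bilin (fun i => f2at i z) (fun i => dFat i z) h2
    have he : ∑ i, (wirt (fun w => f2 w i) z * F z i + f2 z i * wirt (fun w => F w i) z)
        = ((∑ i, wirt (fun w => f2 w i) z * F z i) + (∑ i, f2 z i * f1 z i))
          + c0 z * ∑ i, f2 z i * F z i := by
      rw [Finset.mul_sum, ← Finset.sum_add_distrib, ← Finset.sum_add_distrib]
      exact Finset.sum_congr rfl fun i _ => by rw [hwFeq z i]; ring
    rw [he, stepG z, h2 z] at h
    linear_combination h
  -- conclusion
  intro z
  have he : ∑ i, f3 z i * F z i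
      = (∑ i, wirt (fun w => f2 w i) z * F z i) - c2 z * ∑ i, f2 z i * F z i := by
    rw [← sum_sub_mul]
    exact Finset.sum_congr rfl fun i _ => by rw [hc2]
  rw [he, stepH z, h2 z]; ring
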